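/- Let σ : ℝ → ℝ be defined by σ(x) = C_m · σ̃(x) · sin(m x), where σ̃ is an odd, twice-differentiable function equal to 1/x^α for |x| > 1 with α > 3 and bounded with bounded first and second derivatives on [−1,1]. Then σ is even, and there is a constant C′ > 0 such that |σ^{(j)}(x)| ≤ C′/(c^{−1} + |x|)^{1+ε+j} for j = 0,1,2, all x ∈ ℝ, with ε = min(1, α−3) and any fixed c > 0. -/

import Mathlib

set_option maxHeartbeats 1000000 in
theorem stmt_9 (m Cm α c : ℝ) (hα : 3 < α) (hc : 0 < c)
    (σt : ℝ → ℝ) (hodd : ∀ x, σt (-x) = -σt x) (hsmooth : ContDiff ℝ 2 σt)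
    (htail : ∀ x : ℝ, 1 < |x| → σt x = Real.sign x / |x| ^ α)
    (hbdd : ∃ B : ℝ, ∀ j ≤ 2, ∀ x ∈ Set.Icc (-1 : ℝ) 1, |iteratedDeriv j σt x| ≤ B)
    (σ : ℝ → ℝ) (hσ : ∀ x, σ x = Cm * σt x * Real.sin (m * x)) :
    (∀ x, σ (-x) = σ x) ∧
    ∃ C' : ℝ, 0 < C' ∧ ∀ j ≤ 2, ∀ x : ℝ,
      |iteratedDeriv j σ x| ≤ C' / (c⁻¹ + |x|) ^ (1 + min 1 (α - 3) + (j : ℝ)) := by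
  have hα0 : (0:ℝ) < α := by linarith
  have heven : ∀ x, σ (-x) = σ x := by
    intro x
    rw [hσ, hσ, hodd, show m * -x = -(m*x) by ring, Real.sin_neg]
    ring
  refine ⟨heven, ?_⟩
  -- smoothness of σ
  have hσf : σ = fun x => Cm * σt x * Real.sin (m * x) := funext hσ
  have hσs : ContDiff ℝ 2 σ := by
    rw [hσf]
    exact (contDiff_const.mul hsmooth).mul
      ((Real.contDiff_sin.of_le le_top).comp (contDiff_const.mul contDiff_id))
  -- parity of derivatives
  have hd1odd : ∀ x, deriv σ (-x) = - deriv σ x := by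
    intro x
    have h1 : deriv (fun y => σ (-y)) x = - deriv σ (-x) := deriv_comp_neg σ x
    have h2 : (fun y => σ (-y)) = σ := funext heven
    rw [h2] at h1
    linarith
  have hd2even : ∀ x, deriv (deriv σ) (-x) = deriv (deriv σ) x := by
    intro x
    have h1 : deriv (fun y => deriv σ (-y)) x = - deriv (deriv σ) (-x) := deriv_comp_neg (deriv σ) x
    have h2 : (fun y => deriv σ (-y)) = fun y => - deriv σ y := funext hd1odd
    rw [h2, deriv.fun_neg] at h1
    linarith
  have hparity : ∀ j, j ≤ 2 → ∀ x : ℝ, |iteratedDeriv j σ (-x)| = |iteratedDeriv j σ x| := by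
    intro j hj x
    interval_cases j
    · simp [iteratedDeriv_zero, heven x]
    · simp [iteratedDeriv_one, hd1odd x, abs_neg]
    · have : (2:ℕ) = 1 + 1 := rfl
      rw [this, iteratedDeriv_succ, iteratedDeriv_one, hd2even]
  -- bounds on the compact part
  obtain ⟨M0, hM0⟩ := (isCompact_Icc (a := (-1:ℝ)) (b := 1)).exists_bound_of_continuousOn
    ((hσs.continuous_iteratedDeriv 0 (by norm_num)).continuousOn)
  obtain ⟨M1, hM1⟩ := (isCompact_Icc (a := (-1:ℝ)) (b := 1)).exists_bound_of_continuousOn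
    ((hσs.continuous_iteratedDeriv 1 (by norm_num)).continuousOn)
  obtain ⟨M2, hM2⟩ := (isCompact_Icc (a := (-1:ℝ)) (b := 1)).exists_bound_of_continuousOn
    ((hσs.continuous_iteratedDeriv 2 (by norm_num)).continuousOn)
  set M : ℝ := max (max M0 M1) (max M2 0) with hMdef
  have hM : ∀ j, j ≤ 2 → ∀ x ∈ Set.Icc (-1:ℝ) 1, |iteratedDeriv j σ x| ≤ M := by
    intro j hj x hx
    interval_cases j
    · exact le_trans (by simpa using hM0 x hx) (le_trans (le_max_left _ _) (le_max_left _ _))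
    · exact le_trans (by simpa using hM1 x hx) (le_trans (le_max_right _ _) (le_max_left _ _))
    · exact le_trans (by simpa using hM2 x hx) (le_trans (le_max_left _ _) (le_max_right _ _))
  have hM0' : 0 ≤ M := le_trans (le_max_right _ _) (le_max_right _ _)
  -- the tail functions
  set g0 : ℝ → ℝ := fun y => Cm * (y ^ (-α) * Real.sin (m * y)) with hg0def
  set g1 : ℝ → ℝ := fun y => Cm * ((-α) * y ^ (-α - 1) * Real.sin (m * y)
      + y ^ (-α) * (Real.cos (m * y) * m)) with hg1def
  set g2 : ℝ → ℝ := fun y => Cm * (((-α) * ((-α - 1) * y ^ (-α - 1 - 1)) * Real.sin (m * y)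
      + (-α) * y ^ (-α - 1) * (Real.cos (m * y) * m))
      + (((-α) * y ^ (-α - 1)) * (Real.cos (m * y) * m)
      + y ^ (-α) * ((-Real.sin (m * y) * m) * m))) with hg2def
  have hlin : ∀ y : ℝ, HasDerivAt (fun z : ℝ => m * z) m y := by
    intro y
    simpa using (hasDerivAt_id y).const_mul m
  have hsin : ∀ y : ℝ, HasDerivAt (fun z => Real.sin (m * z)) (Real.cos (m * y) * m) y := by
    intro y
    exact (Real.hasDerivAt_sin (m * y)).comp y (hlin y)
  have hcos : ∀ y : ℝ, HasDerivAt (fun z => Real.cos (m * z)) (-Real.sin (m * y) * m) y := by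
    intro y
    exact (Real.hasDerivAt_cos (m * y)).comp y (hlin y)
  have hg0d : ∀ y : ℝ, 0 < y → HasDerivAt g0 (g1 y) y := by
    intro y hy
    exact (((Real.hasDerivAt_rpow_const (p := -α) (Or.inl hy.ne')).mul (hsin y)).const_mul Cm)
  have hg1d : ∀ y : ℝ, 0 < y → HasDerivAt g1 (g2 y) y := by
    intro y hy
    have hA : HasDerivAt (fun z => (-α) * z ^ (-α - 1) * Real.sin (m * z))
        ((-α) * ((-α - 1) * y ^ (-α - 1 - 1)) * Real.sin (m * y)
          + (-α) * y ^ (-α - 1) * (Real.cos (m * y) * m)) y :=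
      (((Real.hasDerivAt_rpow_const (p := -α - 1) (Or.inl hy.ne')).const_mul (-α)).mul (hsin y))
    have hB : HasDerivAt (fun z => z ^ (-α) * (Real.cos (m * z) * m))
        (((-α) * y ^ (-α - 1)) * (Real.cos (m * y) * m)
          + y ^ (-α) * ((-Real.sin (m * y) * m) * m)) y :=
      ((Real.hasDerivAt_rpow_const (p := -α) (Or.inl hy.ne')).mul ((hcos y).mul_const m))
    exact ((hA.add hB).const_mul Cm)
  -- σ agrees with g0 on (1, ∞)
  have hagree : ∀ y : ℝ, 1 < y → σ y = g0 y := by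
    intro y hy
    have hy0 : (0:ℝ) < y := lt_trans one_pos hy
    have h1 : σt y = y ^ (-α) := by
      rw [htail y (by rwa [abs_of_pos hy0]), Real.sign_of_pos hy0, abs_of_pos hy0,
        Real.rpow_neg hy0.le]
      ring
    rw [hσ y, h1, hg0def]
    ring
  have hagree' : ∀ x : ℝ, 1 < x → σ =ᶠ[nhds x] g0 := by
    intro x hx
    filter_upwards [Ioi_mem_nhds hx] with y hy using hagree y hy
  have hder1 : ∀ x : ℝ, 1 < x → deriv σ x = g1 x := by
    intro x hx
    exact ((hagree' x hx).deriv_eq).trans (hg0d x (lt_trans one_pos hx)).deriv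
  have hder2 : ∀ x : ℝ, 1 < x → deriv (deriv σ) x = g2 x := by
    intro x hx
    have h1 : deriv σ =ᶠ[nhds x] g1 := by
      filter_upwards [Ioi_mem_nhds hx] with y hy using hder1 y hy
    exact (h1.deriv_eq).trans (hg1d x (lt_trans one_pos hx)).deriv
  -- the tail constant
  set K : ℝ := |Cm| * ((1 + α) ^ 2 * (1 + |m|) ^ 2) with hKdef
  have hK0 : 0 ≤ K := by positivity
  have hsb : ∀ y : ℝ, |Real.sin y| ≤ 1 := fun y => abs_le.mpr ⟨Real.neg_one_le_sin y, Real.sin_le_one y⟩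
  have hcb : ∀ y : ℝ, |Real.cos y| ≤ 1 := fun y => abs_le.mpr ⟨Real.neg_one_le_cos y, Real.cos_le_one y⟩
  have key : ∀ j, j ≤ 2 → ∀ x : ℝ, 1 < x → |iteratedDeriv j σ x| ≤ K * x ^ (-α) := by
    intro j hj x hx
    have hx0 : (0:ℝ) < x := lt_trans one_pos hx
    have hx1 : (1:ℝ) ≤ x := hx.le
    have h0 : (0:ℝ) < x ^ (-α) := Real.rpow_pos_of_pos hx0 _
    have h1le : x ^ (-α - 1) ≤ x ^ (-α) := Real.rpow_le_rpow_of_exponent_le hx1 (by linarith)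
    have h2le : x ^ (-α - 1 - 1) ≤ x ^ (-α) := Real.rpow_le_rpow_of_exponent_le hx1 (by linarith)
    have h1p : (0:ℝ) < x ^ (-α - 1) := Real.rpow_pos_of_pos hx0 _
    have h2p : (0:ℝ) < x ^ (-α - 1 - 1) := Real.rpow_pos_of_pos hx0 _
    have hs := hsb (m * x); have hc := hcb (m * x)
    have hsn := abs_nonneg (Real.sin (m * x)); have hcn := abs_nonneg (Real.cos (m * x))
    have hCm := abs_nonneg Cm
    have hm0 := abs_nonneg m
    have hQ0 : (1:ℝ) ≤ (1 + α) ^ 2 * (1 + |m|) ^ 2 := by nlinarith [mul_nonneg hα0.le hm0, mul_nonneg hm0 hm0, mul_nonneg hα0.le hα0.le, mul_nonneg (mul_nonneg hα0.le hα0.le) hm0, mul_nonneg (mul_nonneg hα0.le hm0) hm0, mul_nonneg (mul_nonneg (mul_nonneg hα0.le hα0.le) hm0) hm0, mul_nonneg (mul_nonneg hα0.le hm0) (mul_nonneg hm0 hα0.le), mul_nonneg (mul_nonneg hα0.le hm0) hm0, mul_nonneg hα0.le (mul_nonneg hm0 hm0), mul_nonneg (mul_nonneg hα0.le hα0.le)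 (mul_nonneg hm0 hm0)]
    have hQ1 : α + |m| ≤ (1 + α) ^ 2 * (1 + |m|) ^ 2 := by nlinarith [mul_nonneg hα0.le hm0, mul_nonneg hm0 hm0, mul_nonneg hα0.le hα0.le, mul_nonneg (mul_nonneg hα0.le hα0.le) hm0, mul_nonneg (mul_nonneg hα0.le hm0) hm0, mul_nonneg (mul_nonneg (mul_nonneg hα0.le hα0.le) hm0) hm0, mul_nonneg (mul_nonneg hα0.le hm0) (mul_nonneg hm0 hα0.le), mul_nonneg (mul_nonneg hα0.le hm0) hm0, mul_nonneg hα0.le (mul_nonneg hm0 hm0), mul_nonneg (mul_nonneg hα0.le hα0.le) (mul_nonneg hm0 hm0)]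
    have hQ2 : α * (α + 1) + (α * |m| + (α * |m| + |m| * |m|)) ≤ (1 + α) ^ 2 * (1 + |m|) ^ 2 := by
      nlinarith [mul_nonneg hα0.le hm0, mul_nonneg hm0 hm0, mul_nonneg (mul_nonneg hα0.le hα0.le) hm0,
        mul_nonneg (mul_nonneg hα0.le hm0) hm0, mul_nonneg (mul_nonneg (mul_nonneg hα0.le hα0.le) hm0) hm0]
    interval_cases j
    · rw [iteratedDeriv_zero, hagree x hx, hg0def]
      have heq : |Cm * (x ^ (-α) * Real.sin (m * x))| = |Cm| * (x ^ (-α) * |Real.sin (m * x)|) := by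
        rw [abs_mul, abs_mul, abs_of_pos h0]
      rw [heq, hKdef]
      nlinarith [mul_le_mul_of_nonneg_left hs (mul_nonneg hCm h0.le),
        mul_le_mul_of_nonneg_right hQ0 (mul_nonneg hCm h0.le)]
    · rw [iteratedDeriv_one, hder1 x hx, hg1def]
      have e1 : |(-α) * x ^ (-α - 1) * Real.sin (m * x)| ≤ α * x ^ (-α) := by
        rw [abs_mul, abs_mul, abs_neg, abs_of_pos hα0, abs_of_pos h1p]
        nlinarith [mul_le_mul_of_nonneg_left hs (mul_nonneg hα0.le h1p.le),
          mul_le_mul_of_nonneg_left h1le hα0.le]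
      have e2 : |x ^ (-α) * (Real.cos (m * x) * m)| ≤ x ^ (-α) * |m| := by
        rw [abs_mul, abs_mul, abs_of_pos h0]
        nlinarith [mul_le_mul_of_nonneg_left (mul_le_mul_of_nonneg_right hc hm0) h0.le]
      calc |Cm * ((-α) * x ^ (-α - 1) * Real.sin (m * x) + x ^ (-α) * (Real.cos (m * x) * m))|
          ≤ |Cm| * (α * x ^ (-α) + x ^ (-α) * |m|) := by
            rw [abs_mul]
            exact mul_le_mul_of_nonneg_left (le_trans (abs_add_le _ _) (add_le_add e1 e2)) hCm
        _ ≤ K * x ^ (-α) := by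
            rw [hKdef]
            nlinarith [mul_le_mul_of_nonneg_left (mul_le_mul_of_nonneg_right hQ1 h0.le) hCm]
    · have h2 : iteratedDeriv 2 σ = deriv (deriv σ) := by
        rw [show (2:ℕ) = 1 + 1 from rfl, iteratedDeriv_succ, iteratedDeriv_one]
      rw [h2, hder2 x hx, hg2def]
      have e1 : |(-α) * ((-α - 1) * x ^ (-α - 1 - 1)) * Real.sin (m * x)|
          ≤ (α * (α + 1)) * x ^ (-α) := by
        rw [abs_mul, abs_mul, abs_mul, abs_neg, abs_of_pos hα0,
          abs_of_neg (show -α - 1 < (0:ℝ) by linarith), abs_of_pos h2p]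
        have h5 : α * ((α + 1) * x ^ (-α - 1 - 1)) * |Real.sin (m * x)|
            ≤ α * ((α + 1) * x ^ (-α - 1 - 1)) * 1 :=
          mul_le_mul_of_nonneg_left hs (by positivity)
        have h6 : α * ((α + 1) * x ^ (-α - 1 - 1)) ≤ α * ((α + 1) * x ^ (-α)) :=
          mul_le_mul_of_nonneg_left (mul_le_mul_of_nonneg_left h2le (by linarith)) hα0.le
        nlinarith [h5, h6]
      have e2 : |(-α) * x ^ (-α - 1) * (Real.cos (m * x) * m)| ≤ (α * |m|) * x ^ (-α) := by
        rw [abs_mul, abs_mul, abs_mul, abs_neg, abs_of_pos hα0, abs_of_pos h1p]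
        have h5 := mul_le_mul (mul_le_mul_of_nonneg_left h1le hα0.le)
          (mul_le_mul_of_nonneg_right hc hm0) (by positivity) (by positivity)
        nlinarith [h5]
      have e3 : |x ^ (-α) * ((-Real.sin (m * x) * m) * m)| ≤ (|m| * |m|) * x ^ (-α) := by
        rw [abs_mul, abs_mul, abs_mul, abs_neg, abs_of_pos h0]
        have h5 : (|Real.sin (m * x)| * |m|) * |m| ≤ (1 * |m|) * |m| :=
          mul_le_mul_of_nonneg_right (mul_le_mul_of_nonneg_right hs hm0) hm0
        nlinarith [mul_le_mul_of_nonneg_left h5 h0.le]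
      calc |Cm * (((-α) * ((-α - 1) * x ^ (-α - 1 - 1)) * Real.sin (m * x)
              + (-α) * x ^ (-α - 1) * (Real.cos (m * x) * m))
              + (((-α) * x ^ (-α - 1)) * (Real.cos (m * x) * m)
              + x ^ (-α) * ((-Real.sin (m * x) * m) * m)))|
          ≤ |Cm| * (((α * (α + 1)) * x ^ (-α) + (α * |m|) * x ^ (-α))
              + ((α * |m|) * x ^ (-α) + (|m| * |m|) * x ^ (-α))) := by
            rw [abs_mul]
            refine mul_le_mul_of_nonneg_left ?_ hCm
            refine le_trans (abs_add_le _ _) (add_le_add (le_trans (abs_add_le _ _) (add_le_add e1 e2))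
              (le_trans (abs_add_le _ _) (add_le_add ?_ e3)))
            exact e2
        _ ≤ K * x ^ (-α) := by
            rw [hKdef]
            nlinarith [mul_le_mul_of_nonneg_left (mul_le_mul_of_nonneg_right hQ2 h0.le) hCm]
  -- assemble
  set ε : ℝ := min 1 (α - 3) with hεdef
  have hε0 : 0 < ε := lt_min one_pos (by linarith)
  have hε1 : ε ≤ 1 := min_le_left _ _
  have hεα : ε ≤ α - 3 := min_le_right _ _
  have hci : (0:ℝ) < c⁻¹ := inv_pos.mpr hc
  have hB1 : (1:ℝ) ≤ c⁻¹ + 1 := by linarith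
  have hB4 : (0:ℝ) < (c⁻¹ + 1) ^ (4:ℝ) := Real.rpow_pos_of_pos (by linarith) _
  refine ⟨(M + K + 1) * (c⁻¹ + 1) ^ (4:ℝ), by positivity, ?_⟩
  have main : ∀ j, j ≤ 2 → ∀ x : ℝ, 0 ≤ x →
      |iteratedDeriv j σ x| ≤ (M + K + 1) * (c⁻¹ + 1) ^ (4:ℝ) / (c⁻¹ + x) ^ (1 + ε + (j:ℝ)) := by
    intro j hj x hx0
    have hjr : (j:ℝ) ≤ 2 := by exact_mod_cast hj
    have hjr0 : (0:ℝ) ≤ (j:ℝ) := Nat.cast_nonneg j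
    set p : ℝ := 1 + ε + (j:ℝ) with hpdef
    have hp0 : 0 ≤ p := by simp [hpdef]; linarith
    have hp4 : p ≤ 4 := by simp [hpdef]; linarith
    have hpα : p ≤ α := by simp [hpdef]; linarith
    have hbpos : (0:ℝ) < c⁻¹ + x := by linarith
    have hbp : (0:ℝ) < (c⁻¹ + x) ^ p := Real.rpow_pos_of_pos hbpos _
    rcases le_or_gt x 1 with hx1 | hx1
    · -- compact part
      have hb1 : (c⁻¹ + x) ^ p ≤ (c⁻¹ + 1) ^ (4:ℝ) := by
        calc (c⁻¹ + x) ^ p ≤ (c⁻¹ + 1) ^ p :=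
              Real.rpow_le_rpow hbpos.le (by linarith) hp0
          _ ≤ (c⁻¹ + 1) ^ (4:ℝ) := Real.rpow_le_rpow_of_exponent_le hB1 hp4
      rw [le_div_iff₀ hbp]
      have hMx : |iteratedDeriv j σ x| ≤ M := hM j hj x ⟨by linarith, hx1⟩
      nlinarith [abs_nonneg (iteratedDeriv j σ x)]
    · -- tail part
      have hx0' : (0:ℝ) < x := lt_trans one_pos hx1
      have hxa : (0:ℝ) < x ^ α := Real.rpow_pos_of_pos hx0' _
      have hxna : (0:ℝ) < x ^ (-α) := Real.rpow_pos_of_pos hx0' _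
      have hb1 : (c⁻¹ + x) ^ p ≤ (c⁻¹ + 1) ^ (4:ℝ) * x ^ α := by
        have hstep : c⁻¹ + x ≤ (c⁻¹ + 1) * x := by nlinarith
        calc (c⁻¹ + x) ^ p ≤ ((c⁻¹ + 1) * x) ^ p :=
              Real.rpow_le_rpow hbpos.le hstep hp0
          _ = (c⁻¹ + 1) ^ p * x ^ p := Real.mul_rpow (by linarith) hx0'.le
          _ ≤ (c⁻¹ + 1) ^ (4:ℝ) * x ^ α := by
              have h1 : (c⁻¹ + 1) ^ p ≤ (c⁻¹ + 1) ^ (4:ℝ) :=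
                Real.rpow_le_rpow_of_exponent_le hB1 hp4
              have h2 : x ^ p ≤ x ^ α := Real.rpow_le_rpow_of_exponent_le hx1.le hpα
              have h3 : (0:ℝ) ≤ (c⁻¹ + 1) ^ p := (Real.rpow_pos_of_pos (by linarith) _).le
              nlinarith
      have hcancel : x ^ (-α) * x ^ α = 1 := by
        rw [← Real.rpow_add hx0']
        simp
      rw [le_div_iff₀ hbp]
      calc |iteratedDeriv j σ x| * (c⁻¹ + x) ^ p
          ≤ (K * x ^ (-α)) * ((c⁻¹ + 1) ^ (4:ℝ) * x ^ α) := by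
            refine mul_le_mul (key j hj x hx1) hb1 hbp.le ?_
            positivity
        _ = (K * (c⁻¹ + 1) ^ (4:ℝ)) * (x ^ (-α) * x ^ α) := by ring
        _ = K * (c⁻¹ + 1) ^ (4:ℝ) := by rw [hcancel]; ring
        _ ≤ (M + K + 1) * (c⁻¹ + 1) ^ (4:ℝ) := by nlinarith
  intro j hj x
  rcases le_or_gt 0 x with hx | hx
  · rw [abs_of_nonneg hx]
    exact main j hj x hx
  · have h1 : |iteratedDeriv j σ x| = |iteratedDeriv j σ (-x)| := by
      have := hparity j hj (-x)
      simpa using this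
    rw [h1, abs_of_neg hx]
    exact main j hj (-x) (by linarith)
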